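/- Let G be the set of non-decreasing, right continuous functions g : ℝ → (−∞,∞] that are bounded below and unbounded above, and let M be the set of non-increasing, right continuous, infinitesimal (tending to 0 at ∞) functions μ : [0,∞) → [0,∞). Then the map μ ↦ g, where g(t) = −log μ(eᵗ), is an order-reversing bijection from M onto G (restricted to appropriate domains, with the convention −log 0 = ∞). -/

import Mathlib

open Filter

/-- The set `M` of non-increasing, right continuous, nonnegative functions on `[0,∞)`
tending to `0` at infinity. -/
def Mset : Set (NNReal → ℝ) :=
  {μ | Antitone μ ∧ (∀ x, 0 ≤ μ x) ∧ (∀ x, ContinuousWithinAt μ (Set.Ici x) x) ∧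
    Filter.Tendsto μ Filter.atTop (nhds 0)}

/-- The set `G` of non-decreasing, right continuous, `(-∞,∞]`-valued functions on `ℝ`,
bounded from below and unbounded from above. -/
def Gset : Set (ℝ → EReal) :=
  {g | Monotone g ∧ (∀ t, ContinuousWithinAt g (Set.Ici t) t) ∧
    (∃ b : ℝ, ∀ t, (b : EReal) ≤ g t) ∧ (∀ b : ℝ, ∃ t, (b : EReal) < g t)}

/-- The map `μ ↦ g`, `g(t) = -log μ(eᵗ)`, with the convention `-log 0 = ∞`. -/
noncomputable def toG (μ : NNReal → ℝ) : ℝ → EReal := fun t =>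
  if μ (Real.toNNReal (Real.exp t)) = 0 then ⊤
  else ((-Real.log (μ (Real.toNNReal (Real.exp t))) : ℝ) : EReal)

namespace Aux15

noncomputable def F (t : ℝ) : NNReal := Real.toNNReal (Real.exp t)

lemma coe_F (t : ℝ) : (F t : ℝ) = Real.exp t :=
  Real.coe_toNNReal _ (Real.exp_nonneg t)

lemma F_pos (t : ℝ) : 0 < F t := Real.toNNReal_pos.mpr (Real.exp_pos t)

lemma F_mono : Monotone F := fun _ _ h => Real.toNNReal_mono (Real.exp_le_exp.mpr h)

lemma log_F (t : ℝ) : Real.log (F t) = t := by rw [coe_F, Real.log_exp]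

lemma F_log {x : NNReal} (hx : x ≠ 0) : F (Real.log (x : ℝ)) = x := by
  have hxp : (0 : ℝ) < x := by exact_mod_cast pos_iff_ne_zero.mpr hx
  exact NNReal.coe_injective (by rw [coe_F, Real.exp_log hxp])

lemma toG_def (μ : NNReal → ℝ) (t : ℝ) :
    toG μ t = if μ (F t) = 0 then ⊤ else ((-Real.log (μ (F t)) : ℝ) : EReal) := rfl

lemma eq_zero_mono {μ : NNReal → ℝ} (ha : Antitone μ) (hn : ∀ x, 0 ≤ μ x)
    {x y : NNReal} (hxy : x ≤ y) (hx : μ x = 0) : μ y = 0 :=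
  le_antisymm (hx ▸ ha hxy) (hn y)

lemma orderIff (μ₁ : NNReal → ℝ) (h₁ : μ₁ ∈ Mset) (μ₂ : NNReal → ℝ) (h₂ : μ₂ ∈ Mset) :
    μ₁ ≤ μ₂ ↔ toG μ₂ ≤ toG μ₁ := by
  obtain ⟨ha₁, hn₁, hc₁, -⟩ := h₁
  obtain ⟨ha₂, hn₂, hc₂, -⟩ := h₂
  constructor
  · intro hle t
    have hab : μ₁ (F t) ≤ μ₂ (F t) := hle _
    by_cases h1 : μ₁ (F t) = 0
    · rw [toG_def μ₁, if_pos h1]; exact le_top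
    · have h1p : 0 < μ₁ (F t) := (hn₁ _).lt_of_ne (Ne.symm h1)
      have h2 : μ₂ (F t) ≠ 0 := ne_of_gt (lt_of_lt_of_le h1p hab)
      rw [toG_def, toG_def, if_neg h1, if_neg h2]
      exact EReal.coe_le_coe_iff.mpr (neg_le_neg (Real.log_le_log h1p hab))
  · intro hle
    have key : ∀ x : NNReal, x ≠ 0 → μ₁ x ≤ μ₂ x := by
      intro x hx
      have ht := hle (Real.log (x : ℝ))
      rw [toG_def, toG_def, F_log hx] at ht
      by_cases h1 : μ₁ x = 0
      · exact h1 ▸ hn₂ x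
      · have h1p : 0 < μ₁ x := (hn₁ _).lt_of_ne (Ne.symm h1)
        by_cases h2 : μ₂ x = 0
        · rw [if_pos h2, if_neg h1] at ht
          exact absurd ht (by simp)
        · have h2p : 0 < μ₂ x := (hn₂ _).lt_of_ne (Ne.symm h2)
          rw [if_neg h1, if_neg h2] at ht
          have hcoe := EReal.coe_le_coe_iff.mp ht
          have hlog : Real.log (μ₁ x) ≤ Real.log (μ₂ x) := by linarith
          rwa [Real.log_le_log_iff h1p h2p] at hlog
    intro x
    by_cases hx : x = 0
    · subst hx
      have hIci : (Set.Ici (0 : NNReal)) = Set.univ := by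
        ext y; simp [zero_le]
      have t1 : Tendsto μ₁ (nhdsWithin 0 (Set.Ioi 0)) (nhds (μ₁ 0)) :=
        (hc₁ 0).mono_left (nhdsWithin_mono _ fun y hy => Set.mem_Ici.mpr (le_of_lt (Set.mem_Ioi.mp hy)))
      have t2 : Tendsto μ₂ (nhdsWithin 0 (Set.Ioi 0)) (nhds (μ₂ 0)) :=
        (hc₂ 0).mono_left (nhdsWithin_mono _ fun y hy => Set.mem_Ici.mpr (le_of_lt (Set.mem_Ioi.mp hy)))
      refine le_of_tendsto_of_tendsto t1 t2 ?_
      filter_upwards [self_mem_nhdsWithin] with y hy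
      exact key y (ne_of_gt (Set.mem_Ioi.mp hy))
    · exact key x hx

lemma mapsTo : ∀ μ ∈ Mset, toG μ ∈ Gset := by
  rintro μ ⟨ha, hn, hc, hT⟩
  refine ⟨?_, ?_, ?_, ?_⟩
  · -- Monotone
    intro s t hst
    by_cases h2 : μ (F t) = 0
    · rw [toG_def μ t, if_pos h2]; exact le_top
    · have h2p : 0 < μ (F t) := (hn _).lt_of_ne (Ne.symm h2)
      have hle : μ (F t) ≤ μ (F s) := ha (F_mono hst)
      have h1 : μ (F s) ≠ 0 := ne_of_gt (lt_of_lt_of_le h2p hle)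
      rw [toG_def, toG_def, if_neg h1, if_neg h2]
      exact EReal.coe_le_coe_iff.mpr (neg_le_neg (Real.log_le_log h2p hle))
  · -- right continuity
    intro t
    by_cases h0 : μ (F t) = 0
    · have hconst : ∀ s ∈ Set.Ici t, toG μ s = (⊤ : EReal) := fun s hs => by
        rw [toG_def, if_pos (eq_zero_mono ha hn (F_mono hs) h0)]
      exact continuousWithinAt_const.congr hconst (hconst t Set.self_mem_Ici)
    · have hp : 0 < μ (F t) := (hn _).lt_of_ne (Ne.symm h0)
      have hcF : Continuous F := continuous_real_toNNReal.comp Real.continuous_exp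
      have hF : ContinuousWithinAt (fun s => μ (F s)) (Set.Ici t) t :=
        (hc (F t)).comp hcF.continuousWithinAt fun s hs => Set.mem_Ici.mpr (F_mono hs)
      have hev : ∀ᶠ s in nhdsWithin t (Set.Ici t), μ (F s) ≠ 0 :=
        hF.eventually (eventually_ne_nhds (ne_of_gt hp))
      have hcont : Tendsto (fun s => ((-Real.log (μ (F s)) : ℝ) : EReal))
          (nhdsWithin t (Set.Ici t)) (nhds ((-Real.log (μ (F t)) : ℝ) : EReal)) := by
        exact (continuous_coe_real_ereal.tendsto _).comp
          (((Real.continuousAt_log (ne_of_gt hp)).tendsto.comp hF).neg)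
      rw [ContinuousWithinAt, toG_def, if_neg h0]
      refine hcont.congr' ?_
      filter_upwards [hev] with s hs
      rw [toG_def, if_neg hs]
  · -- bounded below
    by_cases h0 : μ 0 = 0
    · exact ⟨0, fun t => by
        rw [toG_def, if_pos (eq_zero_mono ha hn zero_le h0)]; exact le_top⟩
    · refine ⟨-Real.log (μ 0), fun t => ?_⟩
      rw [toG_def]
      split_ifs with h
      · exact le_top
      · have hp : 0 < μ (F t) := (hn _).lt_of_ne (Ne.symm h)
        exact EReal.coe_le_coe_iff.mpr (neg_le_neg (Real.log_le_log hp (ha zero_le)))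
  · -- unbounded above
    intro b
    obtain ⟨x, hx⟩ := (hT.eventually_lt_const (Real.exp_pos (-b))).exists
    refine ⟨Real.log (x : ℝ) + 1, ?_⟩
    have hxle : x ≤ F (Real.log (x : ℝ) + 1) := by
      by_cases hx0 : x = 0
      · simp [hx0]
      · have hxp : (0 : ℝ) < x := by exact_mod_cast pos_iff_ne_zero.mpr hx0
        have hle : (x : ℝ) ≤ Real.exp (Real.log (x : ℝ) + 1) := by
          rw [Real.exp_add, Real.exp_log hxp]
          nlinarith [Real.one_le_exp (zero_le_one (α := ℝ))]
        calc x = Real.toNNReal (x : ℝ) := Real.toNNReal_coe.symm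
          _ ≤ F (Real.log (x : ℝ) + 1) := Real.toNNReal_mono hle
    have hlt : μ (F (Real.log (x : ℝ) + 1)) < Real.exp (-b) := lt_of_le_of_lt (ha hxle) hx
    rw [toG_def]
    split_ifs with h
    · exact EReal.coe_lt_top b
    · have hp : 0 < μ (F (Real.log (x : ℝ) + 1)) := (hn _).lt_of_ne (Ne.symm h)
      have := (Real.log_lt_iff_lt_exp hp).mpr hlt
      exact EReal.coe_lt_coe_iff.mpr (by linarith)

lemma surjOn : ∀ g ∈ Gset, ∃ μ ∈ Mset, toG μ = g := by
  rintro g ⟨hm, hrc, ⟨b, hb⟩, hub⟩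
  set h : ℝ → ℝ := fun t => (EReal.exp (-(g t))).toReal with hh
  have hgbot : ∀ t, g t ≠ ⊥ := fun t =>
    ne_of_gt (lt_of_lt_of_le (EReal.bot_lt_coe b) (hb t))
  have hne : ∀ t, EReal.exp (-(g t)) ≠ ⊤ := fun t => by
    simp [EReal.exp_eq_top_iff, EReal.neg_eq_top_iff, hgbot t]
  have hanti : Antitone h := fun s t hst =>
    ENNReal.toReal_mono (hne s) (EReal.exp_le_exp_iff.mpr (EReal.neg_le_neg_iff.mpr (hm hst)))
  have hnonneg : ∀ t, 0 ≤ h t := fun t => ENNReal.toReal_nonneg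
  have hbdd : BddAbove (Set.range h) := by
    refine ⟨(EReal.exp (-(b : EReal))).toReal, ?_⟩
    rintro y ⟨t, rfl⟩
    exact ENNReal.toReal_mono (by simp [EReal.exp_eq_top_iff, EReal.neg_eq_top_iff])
      (EReal.exp_le_exp_iff.mpr (EReal.neg_le_neg_iff.mpr (hb t)))
  have hhc : ∀ t, ContinuousWithinAt h (Set.Ici t) t := by
    intro t
    have h2 : Tendsto (fun s => EReal.exp (-(g s))) (nhdsWithin t (Set.Ici t))
        (nhds (EReal.exp (-(g t)))) :=
      (ENNReal.continuous_exp.tendsto _).comp ((continuous_neg.tendsto _).comp (hrc t))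
    exact (ENNReal.tendsto_toReal (hne t)).comp h2
  have hgt : Tendsto g atTop (nhds ⊤) := by
    rw [EReal.tendsto_nhds_top_iff_real]
    intro c
    obtain ⟨t, ht⟩ := hub c
    exact eventually_atTop.2 ⟨t, fun s hs => lt_of_lt_of_le ht (hm hs)⟩
  have hh0 : Tendsto h atTop (nhds 0) := by
    have hneg : Tendsto (fun t => -(g t)) atTop (nhds (⊥ : EReal)) := by
      have := (continuous_neg.tendsto (⊤ : EReal)).comp hgt
      simpa [Function.comp_def] using this
    have hex : Tendsto (fun t => EReal.exp (-(g t))) atTop (nhds 0) := by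
      have := (ENNReal.continuous_exp.tendsto (⊥ : EReal)).comp hneg
      simpa [Function.comp_def] using this
    have := (ENNReal.tendsto_toReal (by simp : (0 : ENNReal) ≠ ⊤)).comp hex
    simpa [Function.comp_def] using this
  set μ : NNReal → ℝ := fun x => if x = 0 then ⨆ t, h t else h (Real.log (x : ℝ)) with hμ
  have hμpos : ∀ x : NNReal, x ≠ 0 → μ x = h (Real.log (x : ℝ)) := fun x hx => if_neg hx
  have hμ0 : μ 0 = ⨆ t, h t := if_pos rfl
  have hμanti : Antitone μ := by
    intro x y hxy
    by_cases hx : x = 0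
    · subst hx
      rw [hμ0]
      by_cases hy : y = 0
      · rw [hy, hμ0]
      · rw [hμpos y hy]; exact le_ciSup hbdd _
    · have hy : y ≠ 0 := fun hy0 => hx (le_antisymm (hy0 ▸ hxy) zero_le)
      rw [hμpos x hx, hμpos y hy]
      have hxp : (0 : ℝ) < x := by exact_mod_cast pos_iff_ne_zero.mpr hx
      exact hanti (Real.log_le_log hxp (by exact_mod_cast hxy))
  have hμnn : ∀ x, 0 ≤ μ x := by
    intro x
    by_cases hx : x = 0
    · rw [hx, hμ0]; exact le_trans (hnonneg 0) (le_ciSup hbdd 0)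
    · rw [hμpos x hx]; exact hnonneg _
  have hμrc : ∀ x, ContinuousWithinAt μ (Set.Ici x) x := by
    intro x
    by_cases hx : x = 0
    · subst hx
      rw [ContinuousWithinAt]
      have hsplit : Set.Ici (0 : NNReal) = {0} ∪ Set.Ioi 0 := by
        ext y
        simp only [Set.mem_Ici, Set.mem_union, Set.mem_singleton_iff, Set.mem_Ioi]
        constructor
        · intro _
          rcases eq_or_lt_of_le (zero_le : (0 : NNReal) ≤ y) with h | h
          · exact Or.inl h.symm
          · exact Or.inr h
        · intro _
          exact zero_le
      rw [hsplit, nhdsWithin_union, tendsto_sup]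
      constructor
      · rw [nhdsWithin_singleton]
        exact tendsto_pure_nhds μ 0
      · have hcoe : Tendsto (fun y : NNReal => (y : ℝ)) (nhdsWithin 0 (Set.Ioi 0))
            (nhdsWithin 0 (Set.Ioi 0)) := by
          rw [nhdsWithin, nhdsWithin]
          refine Tendsto.inf ?_ (tendsto_principal_principal.2 fun y hy => ?_)
          · simpa using (NNReal.continuous_coe.tendsto 0)
          · exact Set.mem_Ioi.mpr (by exact_mod_cast pos_iff_ne_zero.mpr (ne_of_gt (Set.mem_Ioi.mp hy)))
        have hlog : Tendsto (fun y : NNReal => Real.log (y : ℝ)) (nhdsWithin 0 (Set.Ioi 0))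
            atBot := Real.tendsto_log_nhdsGT_zero.comp hcoe
        have hsup : Tendsto h atBot (nhds (⨆ t, h t)) := tendsto_atBot_ciSup hanti hbdd
        have := hsup.comp hlog
        rw [hμ0]
        refine this.congr' ?_
        filter_upwards [self_mem_nhdsWithin] with y hy
        exact (hμpos y (ne_of_gt (Set.mem_Ioi.mp hy))).symm
    · have hxp : (0 : ℝ) < x := by exact_mod_cast pos_iff_ne_zero.mpr hx
      have hcoe : ContinuousWithinAt (fun y : NNReal => Real.log (y : ℝ)) (Set.Ici x) x :=
        ((Real.continuousAt_log (ne_of_gt hxp)).comp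
          NNReal.continuous_coe.continuousAt).continuousWithinAt
      have hcomp : ContinuousWithinAt (fun y : NNReal => h (Real.log (y : ℝ)))
          (Set.Ici x) x := by
        refine ContinuousWithinAt.comp (f := fun y : NNReal => Real.log (y : ℝ))
          (hhc (Real.log (x : ℝ))) hcoe fun y hy => ?_
        exact Real.log_le_log hxp (by exact_mod_cast (Set.mem_Ici.mp hy))
      refine hcomp.congr (fun y hy => ?_) ?_
      · exact hμpos y fun hy0 => hx (le_antisymm (hy0 ▸ Set.mem_Ici.mp hy) zero_le)
      · exact hμpos x hx
  have hμT : Tendsto μ atTop (nhds 0) := by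
    have hlogT : Tendsto (fun y : NNReal => Real.log (y : ℝ)) atTop atTop :=
      Real.tendsto_log_atTop.comp (NNReal.tendsto_coe_atTop.2 tendsto_id)
    refine (hh0.comp hlogT).congr' ?_
    filter_upwards [eventually_ge_atTop (1 : NNReal)] with y hy
    exact (hμpos y (ne_of_gt (lt_of_lt_of_le one_pos hy))).symm
  refine ⟨μ, ⟨hμanti, hμnn, hμrc, hμT⟩, ?_⟩
  funext t
  have hFne : F t ≠ 0 := ne_of_gt (F_pos t)
  have hμF : μ (F t) = h t := by rw [hμpos _ hFne, log_F]
  rw [toG_def, hμF]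
  by_cases htop : g t = ⊤
  · rw [if_pos (by simp [hh, htop]), htop]
  · obtain ⟨r, hr⟩ : ∃ r : ℝ, g t = (r : EReal) :=
      ⟨(g t).toReal, (EReal.coe_toReal htop (hgbot t)).symm⟩
    have hht : h t = Real.exp (-r) := by
      simp [hh, hr, ← EReal.coe_neg, ENNReal.toReal_ofReal (Real.exp_nonneg _)]
    rw [if_neg (by rw [hht]; exact ne_of_gt (Real.exp_pos _)), hht, Real.log_exp, neg_neg, hr]

end Aux15

theorem stmt_15 :
    Set.BijOn toG Mset Gset ∧
    ∀ μ₁ ∈ Mset, ∀ μ₂ ∈ Mset, (μ₁ ≤ μ₂ ↔ toG μ₂ ≤ toG μ₁) := by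
  refine ⟨⟨Aux15.mapsTo, ?_, ?_⟩, Aux15.orderIff⟩
  · intro μ₁ h₁ μ₂ h₂ heq
    exact le_antisymm ((Aux15.orderIff μ₁ h₁ μ₂ h₂).mpr heq.ge)
      ((Aux15.orderIff μ₂ h₂ μ₁ h₁).mpr heq.le)
  · intro g hg
    obtain ⟨μ, hμ, hμg⟩ := Aux15.surjOn g hg
    exact ⟨μ, hμ, hμg⟩
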